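/- Let n ≥ 2 and consider the symmetric group S_{n+1} of permutations of {1,…,n+1}, with simple transpositions s_i = (i, i+1) for 1 ≤ i ≤ n, and with composition (u·v)(i) = u(v(i)). Let w₀ᴾ be the longest element of the parabolic subgroup generated by s_2,…,s_n, namely the permutation fixing 1 and sending i to n+3−i for 2 ≤ i ≤ n+1. Then for every k with 2 ≤ k ≤ n, the element w = w₀ᴾ·s_1·s_2⋯s_{k−1} satisfies w(j) > w(j+1) for every j with 1 ≤ j ≤ n and j ≠ k; that is, every simple transposition s_j with j ≠ k lies in the right descent set of w. -/
import Mathlib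

lemma prod_swaps_apply (m j : ℕ) :
    (((List.range m).map (fun i => Equiv.swap (i + 1) (i + 2))).prod : Equiv.Perm ℕ) j =
      if j = m + 1 then 1 else if 1 ≤ j ∧ j ≤ m then j + 1 else j := by
  induction m generalizing j with
  | zero =>
    simp only [List.range_zero, List.map_nil, List.prod_nil, Equiv.Perm.coe_one, id_eq]
    split_ifs with h1 h2 <;> omega
  | succ m ih =>
    rw [List.range_succ, List.map_append, List.prod_append]
    simp only [List.map_cons, List.map_nil, List.prod_cons, List.prod_nil, mul_one,
      Equiv.Perm.mul_apply]
    rw [Equiv.swap_apply_def]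
    split_ifs with h1 h2 <;> rw [ih] <;> split_ifs <;> omega

/-- Let `n ≥ 2` and consider the symmetric group `S_{n+1}` of permutations of
`{1,…,n+1}`, with simple transpositions `s_i = (i, i+1)` for `1 ≤ i ≤ n`, and with composition
`(u·v)(i) = u(v(i))`.  Let `w₀ᴾ` be the longest element of the parabolic subgroup generated by
`s_2,…,s_n`, namely the permutation fixing `1` and sending `i` to `n+3−i` for `2 ≤ i ≤ n+1`.
Then for every `k` with `2 ≤ k ≤ n`, the element `w = w₀ᴾ·s_1·s_2⋯s_{k−1}` satisfies
`w(j) > w(j+1)` for every `j` with `1 ≤ j ≤ n` and `j ≠ k`; that is, every simple transposition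
`s_j` with `j ≠ k` lies in the right descent set of `w`. -/
theorem stmt0 (n k : ℕ) (hn : 2 ≤ n) (hk2 : 2 ≤ k) (hkn : k ≤ n)
    (w0P : Equiv.Perm ℕ)
    (hfix : w0P 1 = 1)
    (hrev : ∀ i : ℕ, 2 ≤ i → i ≤ n + 1 → w0P i = n + 3 - i)
    (w : Equiv.Perm ℕ)
    (hw : w = w0P * ((List.range (k - 1)).map (fun i => Equiv.swap (i + 1) (i + 2))).prod) :
    ∀ j : ℕ, 1 ≤ j → j ≤ n → j ≠ k → w j > w (j + 1) := by
  intro j hj1 hjn hjk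
  subst hw
  simp only [Equiv.Perm.mul_apply, prod_swaps_apply]
  -- compute the inner values by cases
  have hm : k - 1 + 1 = k := by omega
  rcases lt_trichotomy j k with hlt | heq | hgt
  · -- j < k, so j ≤ k - 1
    rcases eq_or_lt_of_le (by omega : j + 1 ≤ k) with hjk1 | hjk1
    · -- j = k - 1 : w j = w0P (j+1), w (j+1) = w0P 1 = 1
      rw [if_neg (by omega), if_pos ⟨hj1, by omega⟩, if_pos (by omega)]
      rw [hfix, hrev (j + 1) (by omega) (by omega)]
      omega
    · -- j + 1 < k
      rw [if_neg (by omega), if_pos ⟨hj1, by omega⟩,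
        if_neg (by omega), if_pos ⟨by omega, by omega⟩]
      rw [hrev (j + 1) (by omega) (by omega), hrev (j + 2) (by omega) (by omega)]
      omega
  · exact absurd heq hjk
  · -- j > k
    rw [if_neg (by omega), if_neg (by omega), if_neg (by omega), if_neg (by omega)]
    rw [hrev j (by omega) (by omega), hrev (j + 1) (by omega) (by omega)]
    omega
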